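/- Let φ = (1 + √5)/2 be the golden ratio. Then for every positive integer p, π = 5 · ∑_{k=0}^{∞} ( (√(3 − φ))/φ )^{4pk+1} · ∑_{i=0}^{2p−1} ( (√(3 − φ))/φ )^{2i} · (−1)^i / (4pk + 2i + 1). -/

import Mathlib

open Real

theorem pi_golden_bbp_general (p : ℕ) (hp : 0 < p) :
    Real.pi = 5 * ∑' k : ℕ,
      (Real.sqrt (3 - (1 + Real.sqrt 5) / 2) / ((1 + Real.sqrt 5) / 2)) ^ (4 * p * k + 1) *
        ∑ i ∈ Finset.range (2 * p),
          (Real.sqrt (3 - (1 + Real.sqrt 5) / 2) / ((1 + Real.sqrt 5) / 2)) ^ (2 * i) *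
            ((-1 : ℝ) ^ i / ((4 * p * k + 2 * i + 1 : ℕ) : ℝ)) := by
  have h5 : (0:ℝ) ≤ Real.sqrt 5 := Real.sqrt_nonneg 5
  have hs5 : Real.sqrt 5 ^ 2 = 5 := Real.sq_sqrt (by norm_num)
  have h5lt : Real.sqrt 5 < 3 := by nlinarith
  set φ : ℝ := (1 + Real.sqrt 5) / 2 with hφ
  have hφpos : 0 < φ := by rw [hφ]; positivity
  have h3φ : 0 ≤ 3 - φ := by rw [hφ]; linarith
  set x : ℝ := Real.sqrt (3 - φ) / φ with hxdef
  have hcos : Real.cos (π / 5) = φ / 2 := by rw [Real.cos_pi_div_five, hφ]; ring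
  have hsinpos : 0 < Real.sin (π / 5) :=
    Real.sin_pos_of_pos_of_lt_pi (by positivity) (by linarith [pi_pos])
  have hsinsq : Real.sin (π / 5) ^ 2 = (3 - φ) / 4 := by
    have := Real.sin_sq_add_cos_sq (π / 5)
    rw [hcos] at this
    rw [hφ] at *
    nlinarith
  have hsin : Real.sin (π / 5) = Real.sqrt (3 - φ) / 2 := by
    rw [← Real.sqrt_sq hsinpos.le, hsinsq,
      show (3 - φ) / 4 = (Real.sqrt (3-φ)/2)^2 by
        rw [div_pow, Real.sq_sqrt h3φ]; norm_num,
      Real.sqrt_sq (by positivity)]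
  have htan : Real.tan (π / 5) = x := by
    rw [Real.tan_eq_sin_div_cos, hsin, hcos, hxdef]
    field_simp
  have harctan : Real.arctan x = π / 5 := by
    rw [← htan, Real.arctan_tan] <;> linarith [pi_pos]
  have hxnonneg : 0 ≤ x := by positivity
  have hx1 : ‖x‖ < 1 := by
    rw [Real.norm_eq_abs, abs_of_nonneg hxnonneg, ← htan, ← Real.tan_pi_div_four]
    exact Real.tan_lt_tan_of_nonneg_of_lt_pi_div_two (by positivity)
      (by linarith [pi_pos]) (by linarith [pi_pos])
  have hsum : HasSum (fun n : ℕ => (-1) ^ n * x ^ (2 * n + 1) / ((2 * n + 1 : ℕ) : ℝ))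
      (Real.arctan x) := Real.hasSum_arctan hx1
  haveI : NeZero (2 * p) := ⟨by omega⟩
  set f : ℕ → ℝ := fun n => (-1) ^ n * x ^ (2 * n + 1) / ((2 * n + 1 : ℕ) : ℝ) with hfdef
  have he : HasSum (fun q : ℕ × Fin (2 * p) => f (q.1 * (2 * p) + (q.2 : ℕ)))
      (Real.arctan x) := by
    have := (Equiv.hasSum_iff (Nat.divModEquiv (2 * p)).symm).2 hsum
    simpa [Nat.divModEquiv, Function.comp_def] using this
  have hg : HasSum (fun k : ℕ => ∑ i : Fin (2 * p), f (k * (2 * p) + (i : ℕ)))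
      (Real.arctan x) := he.prod_fiberwise (fun b => hasSum_fintype _)
  have hterm : ∀ k : ℕ, (∑ i : Fin (2 * p), f (k * (2 * p) + (i : ℕ))) =
      x ^ (4 * p * k + 1) * ∑ i ∈ Finset.range (2 * p),
        x ^ (2 * i) * ((-1 : ℝ) ^ i / ((4 * p * k + 2 * i + 1 : ℕ) : ℝ)) := by
    intro k
    rw [Fin.sum_univ_eq_sum_range (fun j => f (k * (2 * p) + j)), Finset.mul_sum]
    refine Finset.sum_congr rfl fun i _ => ?_
    rw [hfdef]
    have h1 : ((-1 : ℝ)) ^ (k * (2 * p) + i) = (-1) ^ i := by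
      rw [pow_add, show k * (2 * p) = 2 * (k * p) by ring, pow_mul]
      norm_num
    have h2 : 2 * (k * (2 * p) + i) + 1 = 4 * p * k + 2 * i + 1 := by ring
    simp only [h1, h2]
    rw [show 4 * p * k + 2 * i + 1 = (4 * p * k + 1) + 2 * i by ring, pow_add]
    ring
  rw [tsum_congr (fun k => (hterm k).symm), hg.tsum_eq, harctan]
  ring
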